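/- The function f is bounded below on its domain: there exists m ∈ ℝ such that f({C_i}, μ, Λ) ≥ m for all ({C_i}, μ, Λ) ∈ (ℝ^n)^M × ℝ^n × S_n^{++}(ℝ). More precisely, with m_Λ the global minimum over S_n^{++}(ℝ) of Λ ↦ −((ν − n + M)/2) log det Λ + (1/2) trace(ν Σ_0 Λ), one has f({C_i}, μ, Λ) ≥ m_Λ + (1/2)∑_{i=1}^M (C_i − μ)^T Λ (C_i − μ) + (κ/2)(μ − μ_0)^T Λ (μ − μ_0) ≥ m_Λ. -/

import Mathlib

open Matrix Filter

variable {n : ℕ}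

lemma myPosDef_smul {A : Matrix (Fin n) (Fin n) ℝ} (hA : A.PosDef) {c : ℝ} (hc : 0 < c) :
    (c • A).PosDef := by
  refine Matrix.PosDef.of_dotProduct_mulVec_pos ?_ (fun x hx => ?_)
  · unfold Matrix.IsHermitian
    rw [conjTranspose_smul]
    simp only [star_trivial]
    rw [show Aᴴ = A from hA.1]
  · rw [smul_mulVec, dotProduct_smul, smul_eq_mul]
    exact mul_pos hc (by simpa using hA.dotProduct_mulVec_pos hx)

lemma myPosDef_conj {B Λ : Matrix (Fin n) (Fin n) ℝ} (hB : B.IsHermitian)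
    (hdet : B.det ≠ 0) (hΛ : Λ.PosDef) : (B * Λ * B).PosDef := by
  have hBt : Bᵀ = B := hB
  refine Matrix.PosDef.of_dotProduct_mulVec_pos ?_ (fun x hx => ?_)
  · unfold Matrix.IsHermitian
    simp only [conjTranspose_mul, hB.eq, hΛ.1.eq, mul_assoc]
  · have hBx : B *ᵥ x ≠ 0 := by
      intro h
      apply hx
      have := (Matrix.mulVec_injective_iff_isUnit.mpr (isUnit_iff_isUnit_det B |>.2 hdet.isUnit))
      exact this (by simpa using h)
    have key : x ⬝ᵥ (B * Λ * B) *ᵥ x = (B *ᵥ x) ⬝ᵥ Λ *ᵥ (B *ᵥ x) := by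
      have hv : x ᵥ* B = B *ᵥ x := by rw [← mulVec_transpose, hBt]
      rw [← mulVec_mulVec, ← mulVec_mulVec, dotProduct_mulVec, hv]
    rw [star_trivial, key]
    simpa using hΛ.dotProduct_mulVec_pos hBx

lemma myTrace_eq_sum_eigenvalues {A : Matrix (Fin n) (Fin n) ℝ} (hA : A.IsHermitian) :
    A.trace = ∑ i, hA.eigenvalues i := by
  simpa using hA.trace_eq_sum_eigenvalues

lemma myTrace_sub_log_det {X : Matrix (Fin n) (Fin n) ℝ} (hX : X.PosDef) :
    (n : ℝ) ≤ X.trace - Real.log X.det := by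
  have hdet : X.det = ∏ i, hX.1.eigenvalues i := by
    rw [hX.1.det_eq_prod_eigenvalues]; norm_num
  rw [myTrace_eq_sum_eigenvalues hX.1, hdet,
    Real.log_prod (fun i _ => (hX.eigenvalues_pos i).ne'), ← Finset.sum_sub_distrib]
  calc (n : ℝ) = ∑ _i : Fin n, (1 : ℝ) := by simp
    _ ≤ _ := by
        refine Finset.sum_le_sum fun i _ => ?_
        have h := Real.log_le_sub_one_of_pos (hX.eigenvalues_pos i)
        linarith

open scoped MatrixOrder in
lemma myKey {P Λ : Matrix (Fin n) (Fin n) ℝ} (hP : P.PosDef) (hΛ : Λ.PosDef) :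
    (n : ℝ) + Real.log P.det ≤ (P * Λ).trace - Real.log Λ.det := by
  set B := CFC.sqrt P with hBdef
  have hB : B.PosSemidef := (CFC.sqrt_nonneg P).posSemidef
  have hBB : B * B = P := CFC.sqrt_mul_sqrt_self P hP.posSemidef.nonneg
  have hdetBB : B.det * B.det = P.det := by rw [← det_mul, hBB]
  have hdetB : B.det ≠ 0 := by
    intro h; rw [h, mul_zero] at hdetBB; exact hP.det_pos.ne' hdetBB.symm
  have hX : (B * Λ * B).PosDef := myPosDef_conj hB.1 hdetB hΛ
  have htr : (B * Λ * B).trace = (P * Λ).trace := by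
    rw [trace_mul_comm, ← mul_assoc, hBB, trace_mul_comm]
  have hdX : (B * Λ * B).det = P.det * Λ.det := by
    rw [det_mul, det_mul, ← hdetBB]; ring
  have hlog : Real.log (B * Λ * B).det = Real.log P.det + Real.log Λ.det := by
    rw [hdX, Real.log_mul hP.det_pos.ne' hΛ.det_pos.ne']
  have := myTrace_sub_log_det hX
  rw [htr, hlog] at this
  linarith

noncomputable def f (n M : ℕ) (κ ν : ℝ) (Z : Fin M → Fin n → ℝ)
    (D : Fin M → Matrix (Fin n) (Fin n) ℝ) (SN : Fin M → Matrix (Fin n) (Fin n) ℝ)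
    (μ0 : Fin n → ℝ) (S0 : Matrix (Fin n) (Fin n) ℝ)
    (C : Fin M → Fin n → ℝ) (μ : Fin n → ℝ) (Λ : Matrix (Fin n) (Fin n) ℝ) : ℝ :=
  (1/2) * ∑ i, (Z i - (D i).mulVec (C i)) ⬝ᵥ ((SN i)⁻¹).mulVec (Z i - (D i).mulVec (C i))
    - ((ν - n + M)/2) * Real.log Λ.det
    + (1/2) * ∑ i, (C i - μ) ⬝ᵥ Λ.mulVec (C i - μ)
    + (κ/2) * ((μ - μ0) ⬝ᵥ Λ.mulVec (μ - μ0))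
    + (1/2) * (ν • S0 * Λ).trace

/-- f is bounded below; more precisely, with `mΛ` the global minimum over
`S_n^{++}(ℝ)` of `Λ ↦ −((ν−n+M)/2) log det Λ + (1/2) trace(ν Σ₀ Λ)`, one has
`f({C_i}, μ, Λ) ≥ mΛ + (1/2)∑(C_i−μ)ᵀΛ(C_i−μ) + (κ/2)(μ−μ₀)ᵀΛ(μ−μ₀) ≥ mΛ`. -/
theorem stmt_7 (n M : ℕ) (hn : 1 ≤ n) (hM : 1 ≤ M)
    (κ ν : ℝ) (hκ : 0 < κ) (hν : (n : ℝ) - 1 < ν)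
    (Z : Fin M → Fin n → ℝ) (D : Fin M → Matrix (Fin n) (Fin n) ℝ)
    (SN : Fin M → Matrix (Fin n) (Fin n) ℝ) (hSN : ∀ i, (SN i).PosDef)
    (μ0 : Fin n → ℝ) (S0 : Matrix (Fin n) (Fin n) ℝ) (hS0 : S0.PosDef) :
    ∃ mΛ : ℝ,
      IsLeast ((fun Λ : Matrix (Fin n) (Fin n) ℝ =>
          -((ν - n + M)/2) * Real.log Λ.det + (1/2) * (ν • S0 * Λ).trace) ''
        {Λ | Λ.PosDef}) mΛ ∧
      ∀ (C : Fin M → Fin n → ℝ) (μ : Fin n → ℝ) (Λ : Matrix (Fin n) (Fin n) ℝ),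
        Λ.PosDef →
        mΛ ≤ mΛ + (1/2) * ∑ i, (C i - μ) ⬝ᵥ Λ.mulVec (C i - μ)
                + (κ/2) * ((μ - μ0) ⬝ᵥ Λ.mulVec (μ - μ0)) ∧
        mΛ + (1/2) * ∑ i, (C i - μ) ⬝ᵥ Λ.mulVec (C i - μ)
          + (κ/2) * ((μ - μ0) ⬝ᵥ Λ.mulVec (μ - μ0))
          ≤ f n M κ ν Z D SN μ0 S0 C μ Λ := by
  set α : ℝ := (ν - n + M)/2 with hαdef
  have hM1 : (1 : ℝ) ≤ (M : ℝ) := by exact_mod_cast hM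
  have hα : 0 < α := by rw [hαdef]; linarith
  have hν0 : 0 < ν := by
    have : (0 : ℝ) ≤ (n : ℝ) - 1 := by
      have : (1 : ℝ) ≤ (n : ℝ) := by exact_mod_cast hn
      linarith
    linarith
  set P : Matrix (Fin n) (Fin n) ℝ := (2 * α)⁻¹ • (ν • S0) with hPdef
  have hP : P.PosDef := by
    rw [hPdef]
    exact myPosDef_smul (myPosDef_smul hS0 hν0) (by positivity)
  -- the function in question, rewritten
  have hg : ∀ Λ : Matrix (Fin n) (Fin n) ℝ,
      -α * Real.log Λ.det + (1/2) * (ν • S0 * Λ).trace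
        = α * ((P * Λ).trace - Real.log Λ.det) := by
    intro Λ
    have h1 : (P * Λ).trace = (2 * α)⁻¹ * (ν • S0 * Λ).trace := by
      rw [hPdef, smul_mul_assoc, trace_smul, smul_eq_mul]
    rw [h1]
    field_simp
    ring
  set mΛ : ℝ := α * ((n : ℝ) + Real.log P.det) with hmdef
  have hlb : ∀ Λ : Matrix (Fin n) (Fin n) ℝ, Λ.PosDef →
      mΛ ≤ -α * Real.log Λ.det + (1/2) * (ν • S0 * Λ).trace := by
    intro Λ hΛ
    rw [hg Λ, hmdef]
    exact mul_le_mul_of_nonneg_left (myKey hP hΛ) hα.le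
  refine ⟨mΛ, ⟨⟨P⁻¹, hP.inv, ?_⟩, ?_⟩, ?_⟩
  · show -α * Real.log (P⁻¹).det + (1/2) * (ν • S0 * P⁻¹).trace = mΛ
    rw [hg P⁻¹, Matrix.mul_nonsing_inv P hP.det_pos.ne'.isUnit, det_nonsing_inv,
      Ring.inverse_eq_inv, Real.log_inv, trace_one, hmdef]
    simp only [Fintype.card_fin]
    ring
  · rintro y ⟨Λ, hΛ, rfl⟩
    exact hlb Λ hΛ
  · intro C μ Λ hΛ
    have hq1 : 0 ≤ ∑ i, (C i - μ) ⬝ᵥ Λ.mulVec (C i - μ) := by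
      refine Finset.sum_nonneg fun i _ => ?_
      simpa using hΛ.posSemidef.dotProduct_mulVec_nonneg (C i - μ)
    have hq2 : 0 ≤ (μ - μ0) ⬝ᵥ Λ.mulVec (μ - μ0) := by
      simpa using hΛ.posSemidef.dotProduct_mulVec_nonneg (μ - μ0)
    have hq3 : 0 ≤ ∑ i, (Z i - (D i).mulVec (C i)) ⬝ᵥ
        ((SN i)⁻¹).mulVec (Z i - (D i).mulVec (C i)) := by
      refine Finset.sum_nonneg fun i _ => ?_
      simpa using (hSN i).inv.posSemidef.dotProduct_mulVec_nonneg (Z i - (D i).mulVec (C i))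
    have hb := hlb Λ hΛ
    constructor
    · nlinarith [mul_nonneg hκ.le hq2]
    · unfold f
      rw [← hαdef]
      nlinarith [mul_nonneg hκ.le hq2]
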